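/- (Proposition 2.1, pointwise form) With ε, p, N_L, ω_L and N_R as in the context: (i) ω_L ≥ 1 (in particular ω_L > 0, so N_R is well defined); (ii) g_R(N_R, N_R) = 1; (iii) g_R(N_R, ξ) ≥ 0; and (iv) for every v ∈ ℝ³ with g_L(N_L, v) = 0 one has g_R(N_R, v) = 0. Thus N_R is the unique g_R-unit normal to the g_L-orthogonal complement of N_L having nonnegative g_R-product with ξ. -/

import Mathlib

noncomputable section

open Real

/-- Points/vectors of `ℝ³`. -/
abbrev V3 : Type := ℝ × ℝ × ℝ

/-- The domain `D`: all of `ℝ³` if `κ ≥ 0`, the solid cylinder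
`{x² + y² < -4/κ}` if `κ < 0`. -/
def Dset (κ : ℝ) : Set V3 := {p | κ < 0 → p.1 ^ 2 + p.2.1 ^ 2 < -4 / κ}

/-- The conformal factor `λ`. -/
def lam (κ : ℝ) (p : V3) : ℝ := 1 / (1 + κ / 4 * (p.1 ^ 2 + p.2.1 ^ 2))

/-- The Riemannian BCV metric `g_R` at the point `p`, evaluated on vectors `u, v`. -/
def gR (κ τ : ℝ) (p u v : V3) : ℝ :=
  (lam κ p) ^ 2 * (u.1 * v.1 + u.2.1 * v.2.1) +
    (u.2.2 + τ * lam κ p * (p.2.1 * u.1 - p.1 * u.2.1)) *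
      (v.2.2 + τ * lam κ p * (p.2.1 * v.1 - p.1 * v.2.1))

/-- The Lorentzian BCV metric `g_L` at the point `p`, evaluated on vectors `u, v`. -/
def gL (κ τ : ℝ) (p u v : V3) : ℝ :=
  (lam κ p) ^ 2 * (u.1 * v.1 + u.2.1 * v.2.1) -
    (u.2.2 + τ * lam κ p * (p.2.1 * u.1 - p.1 * u.2.1)) *
      (v.2.2 + τ * lam κ p * (p.2.1 * v.1 - p.1 * v.2.1))

/-- The frame field `E₁` (with `σ = κ/(2τ)`). -/
def E1 (κ τ : ℝ) (p : V3) : V3 :=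
  ((lam κ p)⁻¹ * cos (κ / (2 * τ) * p.2.2),
   (lam κ p)⁻¹ * sin (κ / (2 * τ) * p.2.2),
   τ * (p.1 * sin (κ / (2 * τ) * p.2.2) - p.2.1 * cos (κ / (2 * τ) * p.2.2)))

/-- The frame field `E₂` (with `σ = κ/(2τ)`). -/
def E2 (κ τ : ℝ) (p : V3) : V3 :=
  (-((lam κ p)⁻¹ * sin (κ / (2 * τ) * p.2.2)),
   (lam κ p)⁻¹ * cos (κ / (2 * τ) * p.2.2),
   τ * (p.1 * cos (κ / (2 * τ) * p.2.2) + p.2.1 * sin (κ / (2 * τ) * p.2.2)))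

/-- The (constant) frame field `E₃ = ∂_z`. -/
def E3 : V3 := (0, 0, 1)

/-- The Killing field `ξ = E₃`. -/
def xi : V3 := E3

/-- First coefficient of a vector in the frame `{E₁,E₂,E₃}` (extracted with `g_R`;
the frame is `g_R`-orthonormal on `D`). -/
def c1 (κ τ : ℝ) (p : V3) (u : V3) : ℝ := gR κ τ p u (E1 κ τ p)

/-- Second frame coefficient. -/
def c2 (κ τ : ℝ) (p : V3) (u : V3) : ℝ := gR κ τ p u (E2 κ τ p)

/-- Third frame coefficient. -/
def c3 (κ τ : ℝ) (p : V3) (u : V3) : ℝ := gR κ τ p u E3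

/-- The Riemannian cross product `u ∧_R v` at `p`. -/
def wedgeR (κ τ : ℝ) (p : V3) (u v : V3) : V3 :=
  (c2 κ τ p u * c3 κ τ p v - c3 κ τ p u * c2 κ τ p v) • E1 κ τ p
    - (c1 κ τ p u * c3 κ τ p v - c3 κ τ p u * c1 κ τ p v) • E2 κ τ p
    + (c1 κ τ p u * c2 κ τ p v - c2 κ τ p u * c1 κ τ p v) • E3

/-- The Lorentzian cross product `u ∧_L v` at `p`. -/
def wedgeL (κ τ : ℝ) (p : V3) (u v : V3) : V3 :=
  (c2 κ τ p u * c3 κ τ p v - c3 κ τ p u * c2 κ τ p v) • E1 κ τ p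
    - (c1 κ τ p u * c3 κ τ p v - c3 κ τ p u * c1 κ τ p v) • E2 κ τ p
    - (c1 κ τ p u * c2 κ τ p v - c2 κ τ p u * c1 κ τ p v) • E3

/-- The Lie bracket of vector fields on (an open subset of) `ℝ³`:
`[X,Y](p) = DY(p)(X(p)) − DX(p)(Y(p))`. -/
def lie (X Y : V3 → V3) (p : V3) : V3 :=
  fderiv ℝ Y p (X p) - fderiv ℝ X p (Y p)

/-- The explicit connection `∇ᴿ` of `𝔼³(κ,τ)`. -/
def nablaR (κ τ : ℝ) (X Y : V3 → V3) (p : V3) : V3 :=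
  (fderiv ℝ (fun q => c1 κ τ q (Y q)) p (X p)) • E1 κ τ p
    + (fderiv ℝ (fun q => c2 κ τ q (Y q)) p (X p)) • E2 κ τ p
    + (fderiv ℝ (fun q => c3 κ τ q (Y q)) p (X p)) • E3
    + (τ * c2 κ τ p (X p) * c3 κ τ p (Y p)) • E1 κ τ p
    - (τ * c1 κ τ p (X p) * c3 κ τ p (Y p)) • E2 κ τ p
    + (τ * (c1 κ τ p (X p) * c2 κ τ p (Y p) - c2 κ τ p (X p) * c1 κ τ p (Y p))) • E3
    + ((κ - 2 * τ ^ 2) / (2 * τ) * (c3 κ τ p (X p) * c1 κ τ p (Y p))) • E2 κ τ p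
    - ((κ - 2 * τ ^ 2) / (2 * τ) * (c3 κ τ p (X p) * c2 κ τ p (Y p))) • E1 κ τ p

/-- The explicit connection `∇ᴸ` of `𝕃³(κ,τ)`. -/
def nablaL (κ τ : ℝ) (X Y : V3 → V3) (p : V3) : V3 :=
  (fderiv ℝ (fun q => c1 κ τ q (Y q)) p (X p)) • E1 κ τ p
    + (fderiv ℝ (fun q => c2 κ τ q (Y q)) p (X p)) • E2 κ τ p
    + (fderiv ℝ (fun q => c3 κ τ q (Y q)) p (X p)) • E3
    - (τ * c2 κ τ p (X p) * c3 κ τ p (Y p)) • E1 κ τ p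
    + (τ * c1 κ τ p (X p) * c3 κ τ p (Y p)) • E2 κ τ p
    + (τ * (c1 κ τ p (X p) * c2 κ τ p (Y p) - c2 κ τ p (X p) * c1 κ τ p (Y p))) • E3
    + ((κ + 2 * τ ^ 2) / (2 * τ) * (c3 κ τ p (X p) * c1 κ τ p (Y p))) • E2 κ τ p
    - ((κ + 2 * τ ^ 2) / (2 * τ) * (c3 κ τ p (X p) * c2 κ τ p (Y p))) • E1 κ τ p

/-- `ω_L = √(ε + 2 g_L(N, ξ)²)`. -/
def omegaL (κ τ ε : ℝ) (p : V3) (N : V3) : ℝ :=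
  Real.sqrt (ε + 2 * (gL κ τ p N xi) ^ 2)

/-- `ω_R = 1/ω_L`. -/
def omegaR (κ τ ε : ℝ) (p : V3) (N : V3) : ℝ := 1 / omegaL κ τ ε p N

/-- The Riemannian unit normal `N_R = (1/ω_L)(√(2(ω_L² − ε)) ξ − N_L)`. -/
def NRof (κ τ ε : ℝ) (p : V3) (N : V3) : V3 :=
  (1 / omegaL κ τ ε p N) • (Real.sqrt (2 * ((omegaL κ τ ε p N) ^ 2 - ε)) • xi - N)

/-- `g_L(p)(n, ·)` as a linear form. -/
def gLlin (κ τ : ℝ) (p n : V3) : V3 →ₗ[ℝ] ℝ where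
  toFun v := gL κ τ p n v
  map_add' v w := by
    simp only [gL, Prod.fst_add, Prod.snd_add]
    ring
  map_smul' r v := by
    simp only [gL, Prod.smul_fst, Prod.smul_snd, smul_eq_mul, RingHom.id_apply]
    ring

/-- The tangent plane at `p` determined by the normal `n`:
`P_p = {v : g_L(n,v) = 0}`. -/
def Pp (κ τ : ℝ) (p n : V3) : Submodule ℝ V3 := LinearMap.ker (gLlin κ τ p n)

/-- The Lorentzian shape operator `A_L v = −∇ᴸ_v N_L`. -/
def AL (κ τ : ℝ) (NL : V3 → V3) (p : V3) (v : V3) : V3 :=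
  -(nablaL κ τ (fun _ => v) NL p)

/-- The Riemannian shape operator `A_R v = −∇ᴿ_v N_R`. -/
def AR (κ τ ε : ℝ) (NL : V3 → V3) (p : V3) (v : V3) : V3 :=
  -(nablaR κ τ (fun _ => v) (fun q => NRof κ τ ε q (NL q)) p)

/-- The tangential part `T_L = ξ − ε g_L(N_L, ξ) N_L`. -/
def TLof (κ τ ε : ℝ) (p : V3) (N : V3) : V3 := xi - (ε * gL κ τ p N xi) • N

/-- The tangential part `T_R = ξ − g_R(N_R, ξ) N_R`. -/
def TRof (κ τ ε : ℝ) (p : V3) (N : V3) : V3 :=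
  xi - (gR κ τ p (NRof κ τ ε p N) xi) • NRof κ τ ε p N

/-- The rotation `J_L v = N_L ∧_L v`. -/
def JL (κ τ : ℝ) (p : V3) (N : V3) (v : V3) : V3 := wedgeL κ τ p N v

/-- The rotation `J_R v = N_R ∧_R v`. -/
def JR (κ τ : ℝ) (p : V3) (N : V3) (v : V3) : V3 := wedgeR κ τ p N v

lemma gR_smul_left (κ τ : ℝ) (p : V3) (c : ℝ) (u v : V3) :
    gR κ τ p (c • u) v = c * gR κ τ p u v := by
  simp only [gR, Prod.smul_fst, Prod.smul_snd, smul_eq_mul]; ring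

lemma gR_symm (κ τ : ℝ) (p u v : V3) : gR κ τ p u v = gR κ τ p v u := by
  simp only [gR]; ring

/-- Proposition 2.1, pointwise: properties of `ω_L` and of the
Riemannian unit normal `N_R`. -/
theorem prop_2_1 (κ τ : ℝ) (hτ : τ ≠ 0) (ε : ℝ) (hε : ε = -1 ∨ ε = 1)
    (p : V3) (hp : p ∈ Dset κ) (NL : V3)
    (hNL : gL κ τ p NL NL = ε) (hle : gL κ τ p NL xi ≤ 0) :
    1 ≤ omegaL κ τ ε p NL ∧
    gR κ τ p (NRof κ τ ε p NL) (NRof κ τ ε p NL) = 1 ∧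
    0 ≤ gR κ τ p (NRof κ τ ε p NL) xi ∧
    ∀ v : V3, gL κ τ p NL v = 0 → gR κ τ p (NRof κ τ ε p NL) v = 0 := by
  set L := lam κ p with hLdef
  set B := NL.2.2 + τ * L * (p.2.1 * NL.1 - p.1 * NL.2.1) with hBdef
  have hgLxi : gL κ τ p NL xi = -B := by
    simp only [gL, xi, E3, hBdef, hLdef]; ring
  have hBnn : 0 ≤ B := by rw [hgLxi] at hle; linarith
  have hNL' : L ^ 2 * (NL.1 * NL.1 + NL.2.1 * NL.2.1) - B * B = ε := by
    rw [← hNL]; simp only [gL, hBdef, hLdef]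
  have hQ : 0 ≤ L ^ 2 * (NL.1 * NL.1 + NL.2.1 * NL.2.1) := by
    nlinarith [sq_nonneg (L * NL.1), sq_nonneg (L * NL.2.1)]
  have h1 : 1 ≤ ε + 2 * B ^ 2 := by
    rcases hε with h | h <;> subst h <;> nlinarith
  have hωeq : omegaL κ τ ε p NL = Real.sqrt (ε + 2 * B ^ 2) := by
    rw [omegaL, hgLxi]; congr 1; ring
  have hω1 : 1 ≤ omegaL κ τ ε p NL := by
    rw [hωeq]
    nlinarith [Real.sq_sqrt (by linarith : (0:ℝ) ≤ ε + 2 * B ^ 2),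
      Real.sqrt_nonneg (ε + 2 * B ^ 2)]
  set ω := omegaL κ τ ε p NL with hωdef
  have hωpos : 0 < ω := lt_of_lt_of_le one_pos hω1
  have hωne : ω ≠ 0 := ne_of_gt hωpos
  have hωsq : ω ^ 2 = ε + 2 * B ^ 2 := by
    rw [hωeq]; exact Real.sq_sqrt (by linarith)
  have hs : Real.sqrt (2 * (ω ^ 2 - ε)) = 2 * B := by
    rw [hωsq]
    have h2 : 2 * (ε + 2 * B ^ 2 - ε) = (2 * B) ^ 2 := by ring
    rw [h2, Real.sqrt_sq (by linarith)]
  set W : V3 := (-NL.1, -NL.2.1, 2 * B - NL.2.2) with hWdef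
  have hNR : NRof κ τ ε p NL = (1 / ω) • W := by
    rw [NRof, ← hωdef, hs, hWdef]
    simp only [Prod.ext_iff, xi, E3, Prod.smul_fst, Prod.smul_snd, Prod.fst_sub,
      Prod.snd_sub, smul_eq_mul]
    exact ⟨by ring, by ring, by ring⟩
  have hWW : gR κ τ p W W = ε + 2 * B ^ 2 := by
    simp only [gR, hWdef, ← hLdef]
    linear_combination hNL' + (3 * B - (NL.2.2 + τ * L * (p.2.1 * NL.1 - p.1 * NL.2.1))) * hBdef
  refine ⟨hω1, ?_, ?_, ?_⟩
  · rw [hNR, gR_smul_left, gR_symm, gR_smul_left, gR_symm, hWW, ← hωsq]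
    field_simp
  · rw [hNR, gR_smul_left]
    have hWxi : gR κ τ p W xi = B := by
      simp only [gR, hWdef, xi, E3, ← hLdef]
      linear_combination hBdef
    rw [hWxi]; positivity
  · intro v hv
    have hv' : L ^ 2 * (NL.1 * v.1 + NL.2.1 * v.2.1)
        - B * (v.2.2 + τ * L * (p.2.1 * v.1 - p.1 * v.2.1)) = 0 := by
      rw [← hv]; simp only [gL, hBdef, hLdef]
    rw [hNR, gR_smul_left]
    have hWv : gR κ τ p W v = 0 := by
      simp only [gR, hWdef, ← hLdef]
      linear_combination (-1 : ℝ) * hv'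
        + (v.2.2 + τ * L * (p.2.1 * v.1 - p.1 * v.2.1)) * hBdef
    rw [hWv, mul_zero]


end
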